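/- In the del Pezzo lattice of rank 9 (δ = 8), the action of the Weyl group W₈ on ordered pairs (Q₁, Q₂) of conic classes with Q₁·Q₂ = 4 has exactly two orbits. Two such pairs lie in the same orbit if and only if they agree on the condition '(Q₁+Q₂)·L > 0 for every (−1)-class L'. Representatives of the two orbits are the pair ((1;1,0,0,0,0,0,0,0), (4;0,2,2,2,1,1,1,1)), whose sum pairs positively with every (−1)-class, and the pair ((1;1,0,0,0,0,0,0,0), (5;1,2,2,2,2,2,2,0)), whose sum pairs to 0 with the (−1)-class (0;0,0,0,0,0,0,0,−1). -/

import Mathlib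

/-- A class in the del Pezzo lattice of rank `1 + δ`: the pair `(a, b)`
represents `a·ℓ − b₁e₁ − ⋯ − b_δ e_δ`. -/
abbrev Cls (δ : ℕ) : Type := ℤ × (Fin δ → ℤ)

/-- The intersection product: `(a;b)·(a';b') = a a' − Σ bᵢ bᵢ'`. -/
def ip {δ : ℕ} (x y : Cls δ) : ℤ := x.1 * y.1 - ∑ i, x.2 i * y.2 i

/-- The canonical class `K = −3ℓ + e₁ + ⋯ + e_δ`, i.e. `(−3; −1, …, −1)`. -/
def Kcls (δ : ℕ) : Cls δ := (-3, fun _ => -1)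

/-- A conic class: `Q·Q = 0` and `K·Q = −2`. -/
def IsConic {δ : ℕ} (Q : Cls δ) : Prop := ip Q Q = 0 ∧ ip (Kcls δ) Q = -2

/-- A `(−1)`-class: `L·L = −1` and `K·L = −1`. -/
def IsMinusOne {δ : ℕ} (L : Cls δ) : Prop := ip L L = -1 ∧ ip (Kcls δ) L = -1

/-- Membership in the Weyl group `W_δ`: a ℤ-linear automorphism of the lattice
preserving the intersection form and fixing the canonical class. -/
def IsWeyl {δ : ℕ} (g : Cls δ ≃ₗ[ℤ] Cls δ) : Prop :=
  (∀ x y : Cls δ, ip (g x) (g y) = ip x y) ∧ g (Kcls δ) = Kcls δ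

/-- Ordered pairs of conic classes in the rank-9 del Pezzo lattice with
intersection product 4. -/
def Pair4 : Type :=
  {p : Cls 8 × Cls 8 // IsConic p.1 ∧ IsConic p.2 ∧ ip p.1 p.2 = 4}

/-- Two pairs are related if a Weyl-group element carries one to the other. -/
def pair4Rel (p q : Pair4) : Prop :=
  ∃ g : Cls 8 ≃ₗ[ℤ] Cls 8, IsWeyl g ∧ g p.1.1 = q.1.1 ∧ g p.1.2 = q.1.2

/-- The sum of a pair of classes is "ample": it pairs positively with every
(−1)-class. -/
def SumAmple (p : Cls 8 × Cls 8) : Prop :=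
  ∀ L : Cls 8, IsMinusOne L → 0 < ip (p.1 + p.2) L

def Q₀ : Cls 8 := (1, ![1,0,0,0,0,0,0,0])
def QA : Cls 8 := (4, ![0,2,2,2,1,1,1,1])
def QB : Cls 8 := (5, ![1,2,2,2,2,2,2,0])
def E₈ : Cls 8 := (0, ![0,0,0,0,0,0,0,-1])


namespace DP

lemma ip_add_left {δ} (x y z : Cls δ) : ip (x + y) z = ip x z + ip y z := by
  simp only [ip, Prod.fst_add, Prod.snd_add, Pi.add_apply, add_mul,
    Finset.sum_add_distrib]; ring

lemma ip_add_right {δ} (x y z : Cls δ) : ip x (y + z) = ip x y + ip x z := by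
  simp only [ip, Prod.fst_add, Prod.snd_add, Pi.add_apply, mul_add,
    Finset.sum_add_distrib]; ring

lemma ip_smul_left {δ} (c : ℤ) (x y : Cls δ) : ip (c • x) y = c * ip x y := by
  simp only [ip, Prod.smul_fst, Prod.smul_snd, Pi.smul_apply, smul_eq_mul,
    mul_assoc, ← Finset.mul_sum]; ring

lemma ip_comm {δ} (x y : Cls δ) : ip x y = ip y x := by
  simp only [ip, mul_comm]

lemma ip_smul_right {δ} (c : ℤ) (x y : Cls δ) : ip x (c • y) = c * ip x y := by
  rw [ip_comm, ip_smul_left, ip_comm]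

def reflMap (r : Cls 8) : Cls 8 →ₗ[ℤ] Cls 8 where
  toFun x := x + ip x r • r
  map_add' x y := by rw [ip_add_left, add_smul]; abel
  map_smul' c x := by
    simp only [ip_smul_left, RingHom.id_apply, smul_add, mul_smul]

lemma reflMap_invol (r : Cls 8) (hr : ip r r = -2) : Function.Involutive (reflMap r) := by
  intro x
  simp only [reflMap, LinearMap.coe_mk, AddHom.coe_mk, ip_add_left, ip_smul_left, hr]
  rw [add_smul]
  have : (ip x r * -2) • r = (-2 * ip x r) • r := by ring_nf
  rw [this]
  have : (-2 * ip x r) • r = -((2 * ip x r) • r) := by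
    rw [← neg_smul]; ring_nf
  rw [this]
  have h2 : (2 * ip x r) • r = ip x r • r + ip x r • r := by rw [two_mul, add_smul]
  abel_nf
  rw [h2]
  abel

def reflE (r : Cls 8) (hr : ip r r = -2) : Cls 8 ≃ₗ[ℤ] Cls 8 :=
  { reflMap r with
    invFun := reflMap r
    left_inv := reflMap_invol r hr
    right_inv := reflMap_invol r hr }

lemma reflE_apply (r : Cls 8) (hr : ip r r = -2) (x : Cls 8) :
    reflE r hr x = x + ip x r • r := rfl

lemma isWeyl_reflE (r : Cls 8) (hr : ip r r = -2) (hK : ip (Kcls 8) r = 0) :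
    IsWeyl (reflE r hr) := by
  constructor
  · intro x y
    simp only [reflE_apply, ip_add_left, ip_add_right, ip_smul_left, ip_smul_right, hr]
    rw [ip_comm r y]
    ring
  · simp only [reflE_apply, hK, zero_smul, add_zero]

def permE (σ : Equiv.Perm (Fin 8)) : Cls 8 ≃ₗ[ℤ] Cls 8 where
  toFun x := (x.1, x.2 ∘ σ)
  invFun x := (x.1, x.2 ∘ σ.symm)
  map_add' x y := rfl
  map_smul' c x := rfl
  left_inv x := by
    ext <;> simp
  right_inv x := by
    ext <;> simp

lemma permE_apply (σ : Equiv.Perm (Fin 8)) (x : Cls 8) :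
    permE σ x = (x.1, x.2 ∘ σ) := rfl

lemma isWeyl_permE (σ : Equiv.Perm (Fin 8)) : IsWeyl (permE σ) := by
  constructor
  · intro x y
    simp only [permE_apply, ip, Function.comp_apply]
    congr 1
    exact Equiv.sum_comp σ (fun i => x.2 i * y.2 i)
  · rfl

lemma isWeyl_trans {g h : Cls 8 ≃ₗ[ℤ] Cls 8} (hg : IsWeyl g) (hh : IsWeyl h) :
    IsWeyl (g.trans h) := by
  refine ⟨fun x y => ?_, ?_⟩
  · simp only [LinearEquiv.trans_apply, hh.1, hg.1]
  · simp only [LinearEquiv.trans_apply, hg.2, hh.2]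

lemma isWeyl_symm {g : Cls 8 ≃ₗ[ℤ] Cls 8} (hg : IsWeyl g) : IsWeyl g.symm := by
  refine ⟨fun x y => ?_, ?_⟩
  · conv_rhs => rw [← g.apply_symm_apply x, ← g.apply_symm_apply y, hg.1]
  · exact (LinearEquiv.symm_apply_eq g).mpr hg.2.symm

lemma isWeyl_refl : IsWeyl (LinearEquiv.refl ℤ (Cls 8)) := ⟨fun _ _ => rfl, rfl⟩

end DP

namespace DP


lemma cs8 (b : Fin 8 → ℤ) : (∑ i, b i)^2 ≤ 8 * ∑ i, b i^2 := by
  have h := Finset.sum_mul_sq_le_sq_mul_sq Finset.univ (fun _ => (1:ℤ)) b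
  simpa using h

lemma sum_shift_sq (b : Fin 8 → ℤ) (c : ℤ) :
    ∑ i, (c - b i)^2 = 8*c^2 - 2*c*(∑ i, b i) + ∑ i, b i^2 := by
  have h : ∀ i ∈ Finset.univ, (c - b i)^2 = c^2 - 2*c*b i + b i^2 :=
    fun i _ => by ring
  rw [Finset.sum_congr rfl h, Finset.sum_add_distrib, Finset.sum_sub_distrib,
    Finset.sum_const, ← Finset.mul_sum]
  simp [Finset.card_univ]

lemma conic_sum (Q : Cls 8) (h : IsConic Q) : ∑ i, Q.2 i = 3 * Q.1 - 2 := by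
  have h2 := h.2
  simp only [ip, Kcls] at h2
  have : ∑ i, (-1 : ℤ) * Q.2 i = - ∑ i, Q.2 i := by
    rw [← Finset.sum_neg_distrib]
    exact Finset.sum_congr rfl fun i _ => by ring
  rw [this] at h2
  linarith

lemma conic_sumsq (Q : Cls 8) (h : IsConic Q) : ∑ i, Q.2 i ^ 2 = Q.1 ^ 2 := by
  have h1 := h.1
  simp only [ip] at h1
  have : ∑ i, Q.2 i * Q.2 i = ∑ i, Q.2 i ^ 2 :=
    Finset.sum_congr rfl fun i _ => by ring
  rw [this] at h1
  linarith [sq_abs Q.1]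

lemma conic_pos (Q : Cls 8) (h : IsConic Q) : 1 ≤ Q.1 := by
  have hcs := cs8 Q.2
  rw [conic_sum Q h, conic_sumsq Q h] at hcs
  nlinarith

lemma exists_triple (Q : Cls 8) (h : IsConic Q) (ha : 2 ≤ Q.1) :
    ∃ i j k : Fin 8, i ≠ j ∧ i ≠ k ∧ j ≠ k ∧ Q.1 + 1 ≤ Q.2 i + Q.2 j + Q.2 k := by
  by_contra hcon
  push_neg at hcon
  have H : ∀ i j k : Fin 8, i ≠ j → i ≠ k → j ≠ k → Q.2 i + Q.2 j + Q.2 k ≤ Q.1 := by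
    intro i j k h1 h2 h3
    have := hcon i j k h1 h2 h3
    omega
  set a := Q.1 with hadef
  set b := Q.2 with hbdef
  have hS : ∑ i, b i = 3 * a - 2 := conic_sum Q h
  have hT : ∑ i, b i ^ 2 = a ^ 2 := conic_sumsq Q h
  obtain ⟨i0, _, hi0⟩ := Finset.exists_max_image Finset.univ b ⟨0, Finset.mem_univ 0⟩
  have hne : (Finset.univ.erase i0).Nonempty := by
    rw [← Finset.card_pos, Finset.card_erase_of_mem (Finset.mem_univ i0)]
    simp
  obtain ⟨i1, hi1mem, hi1⟩ := Finset.exists_max_image (Finset.univ.erase i0) b hne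
  have hi1ne : i1 ≠ i0 := Finset.ne_of_mem_erase hi1mem
  set M := b i0 with hM
  set M2 := b i1 with hM2
  have hMtop : ∀ j, b j ≤ M := fun j => hi0 j (Finset.mem_univ j)
  have hM2top : ∀ j, j ≠ i0 → b j ≤ M2 := fun j hj =>
    hi1 j (Finset.mem_erase.mpr ⟨hj, Finset.mem_univ j⟩)
  have hM2M : M2 ≤ M := hMtop i1
  -- sum over univ.erase i0 bounded by 7 * M2
  have hsum1 : M + ∑ j ∈ Finset.univ.erase i0, b j = ∑ j, b j :=
    Finset.add_sum_erase _ b (Finset.mem_univ i0)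
  have hsum1b : ∑ j ∈ Finset.univ.erase i0, b j ≤ 7 * M2 := by
    have := Finset.sum_le_card_nsmul (Finset.univ.erase i0) b M2
      (fun x hx => hM2top x (Finset.ne_of_mem_erase hx))
    rw [Finset.card_erase_of_mem (Finset.mem_univ i0)] at this
    simpa using this
  have hfact2 : 3 * a - 2 - M ≤ 7 * M2 := by
    rw [← hS, ← hsum1]; linarith
  -- sum over the remaining six
  have hi1mem' : i1 ∈ Finset.univ.erase i0 := hi1mem
  have hsum2 : M2 + ∑ j ∈ (Finset.univ.erase i0).erase i1, b j
      = ∑ j ∈ Finset.univ.erase i0, b j := Finset.add_sum_erase _ b hi1mem'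
  have hcard6 : ((Finset.univ.erase i0).erase i1).card = 6 := by
    rw [Finset.card_erase_of_mem hi1mem', Finset.card_erase_of_mem (Finset.mem_univ i0)]
    simp
  have hsix : ∑ j ∈ (Finset.univ.erase i0).erase i1, (M + M2 + b j)
      ≤ ∑ _j ∈ (Finset.univ.erase i0).erase i1, a := by
    refine Finset.sum_le_sum ?_
    intro j hj
    have hji1 : j ≠ i1 := Finset.ne_of_mem_erase hj
    have hji0 : j ≠ i0 := Finset.ne_of_mem_erase (Finset.mem_of_mem_erase hj)
    exact H i0 i1 j (Ne.symm hi1ne) (Ne.symm hji0) (Ne.symm hji1)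
  have hfact1 : 5 * (M + M2) + (3 * a - 2) ≤ 6 * a := by
    simp only [Finset.sum_add_distrib, Finset.sum_const, hcard6, nsmul_eq_mul] at hsix
    push_cast at hsix
    have hrest : ∑ j ∈ (Finset.univ.erase i0).erase i1, b j = 3 * a - 2 - M - M2 := by
      rw [← hS, ← hsum1, ← hsum2]; ring
    rw [hrest] at hsix
    linarith
  -- linear bounds
  have ha6 : a ≤ 6 := by omega
  interval_cases a
  · omega
  · -- a = 3 : M = M2 = 1, all b ≤ 1, needs squares
    have hMle : M ≤ 1 := by omega
    have hble : ∀ j, b j ≤ 1 := fun j => le_trans (hMtop j) hMle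
    have ht0 : ∀ j, 0 ≤ 1 - b j := fun j => by linarith [hble j]
    have htsum : ∑ j, (1 - b j) = 1 := by
      rw [Finset.sum_sub_distrib, Finset.sum_const, hS]
      simp
    have htle : ∀ j, 1 - b j ≤ 1 := by
      intro j
      calc 1 - b j ≤ ∑ i, (1 - b i) :=
            Finset.single_le_sum (fun i _ => ht0 i) (Finset.mem_univ j)
        _ = 1 := htsum
    have htsq : ∀ j ∈ Finset.univ, (1 - b j)^2 ≤ 1 - b j := by
      intro j _
      have h1 := ht0 j; have h2 := htle j
      nlinarith
    have : ∑ j, (1 - b j)^2 ≤ 1 := by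
      calc ∑ j, (1 - b j)^2 ≤ ∑ j, (1 - b j) := Finset.sum_le_sum htsq
        _ = 1 := htsum
    rw [sum_shift_sq b 1, hS, hT] at this
    norm_num at this
  · omega
  · omega
  · -- a = 6 : all b = 2 forced, squares contradict
    have hMle : M ≤ 2 := by omega
    have hble : ∀ j, b j ≤ 2 := fun j => le_trans (hMtop j) hMle
    have ht0 : ∀ j ∈ Finset.univ, 0 ≤ 2 - b j := fun j _ => by linarith [hble j]
    have htsum : ∑ j, (2 - b j) = 0 := by
      rw [Finset.sum_sub_distrib, Finset.sum_const, hS]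
      simp
    have hall : ∀ j ∈ Finset.univ, 2 - b j = 0 :=
      (Finset.sum_eq_zero_iff_of_nonneg ht0).mp htsum
    have hsq : ∑ j, b j ^ 2 = 32 := by
      have : ∀ j ∈ Finset.univ, b j ^ 2 = 4 := by
        intro j hj
        have := hall j hj
        have : b j = 2 := by linarith
        rw [this]; norm_num
      rw [Finset.sum_congr rfl this, Finset.sum_const]
      simp
    rw [hT] at hsq
    norm_num at hsq

end DP

namespace DP

lemma sq_sub_self_nonneg (n : ℤ) : 0 ≤ n^2 - n := by
  rcases le_or_gt n 0 with h | h
  · nlinarith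
  · nlinarith

lemma sq_add_self_nonneg (n : ℤ) : 0 ≤ n^2 + n := by
  rcases le_or_gt n 0 with h | h
  · nlinarith
  · nlinarith

lemma unit_vec (b : Fin 8 → ℤ) (hs : ∑ i, b i = 1) (hq : ∑ i, b i ^ 2 = 1) :
    ∃ i, b i = 1 ∧ ∀ j, j ≠ i → b j = 0 := by
  have hz : ∑ i, (b i ^ 2 - b i) = 0 := by
    rw [Finset.sum_sub_distrib, hs, hq]; ring
  have hbool : ∀ i, b i = 0 ∨ b i = 1 := by
    intro i
    have h0 := (Finset.sum_eq_zero_iff_of_nonneg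
      (fun i _ => sq_sub_self_nonneg (b i))).mp hz i (Finset.mem_univ i)
    have : b i * (b i - 1) = 0 := by nlinarith
    rcases mul_eq_zero.mp this with h | h
    · left; exact h
    · right; linarith
  have hnn : ∀ i, 0 ≤ b i := fun i => by rcases hbool i with h | h <;> omega
  obtain ⟨i, _, hi⟩ := Finset.exists_ne_zero_of_sum_ne_zero (s := Finset.univ)
    (f := b) (by rw [hs]; norm_num)
  have hbi : b i = 1 := by
    rcases hbool i with h | h
    · exact absurd h hi
    · exact h
  refine ⟨i, hbi, fun j hj => ?_⟩
  have hrest : ∑ t ∈ Finset.univ.erase i, b t = 0 := by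
    have := Finset.add_sum_erase Finset.univ b (Finset.mem_univ i)
    rw [hs, hbi] at this
    linarith
  exact (Finset.sum_eq_zero_iff_of_nonneg (fun t _ => hnn t)).mp hrest j
    (Finset.mem_erase.mpr ⟨hj, Finset.mem_univ j⟩)

lemma weyl_conic {g : Cls 8 ≃ₗ[ℤ] Cls 8} (hg : IsWeyl g) {Q : Cls 8}
    (h : IsConic Q) : IsConic (g Q) := by
  refine ⟨by rw [hg.1]; exact h.1, ?_⟩
  have := hg.1 (Kcls 8) Q
  rw [hg.2] at this
  rw [this]; exact h.2

lemma weyl_minusone {g : Cls 8 ≃ₗ[ℤ] Cls 8} (hg : IsWeyl g) {L : Cls 8}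
    (h : IsMinusOne L) : IsMinusOne (g L) := by
  refine ⟨by rw [hg.1]; exact h.1, ?_⟩
  have := hg.1 (Kcls 8) L
  rw [hg.2] at this
  rw [this]; exact h.2

lemma tri_sum (i j k : Fin 8) (hij : i ≠ j) (hik : i ≠ k) (hjk : j ≠ k)
    (c : Fin 8 → ℤ) :
    ∑ t, c t * (if t ∈ ({i,j,k} : Finset (Fin 8)) then (1:ℤ) else 0)
      = c i + c j + c k := by
  have h1 : ∀ t ∈ Finset.univ,
      c t * (if t ∈ ({i,j,k} : Finset (Fin 8)) then (1:ℤ) else 0)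
      = if t ∈ ({i,j,k} : Finset (Fin 8)) then c t else 0 := by
    intro t _
    split <;> ring
  rw [Finset.sum_congr rfl h1, Finset.sum_ite_mem, Finset.univ_inter]
  have hjknot : i ∉ ({j,k} : Finset (Fin 8)) := by
    simp [hij, hik]
  have hknot : j ∉ ({k} : Finset (Fin 8)) := by simp [hjk]
  rw [Finset.sum_insert hjknot, Finset.sum_insert hknot, Finset.sum_singleton]
  ring

/-- The Cremona-type root attached to a triple. -/
def triRoot (i j k : Fin 8) : Cls 8 :=
  (1, fun t => if t ∈ ({i,j,k} : Finset (Fin 8)) then (1:ℤ) else 0)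

lemma triRoot_ip_self (i j k : Fin 8) (hij : i ≠ j) (hik : i ≠ k) (hjk : j ≠ k) :
    ip (triRoot i j k) (triRoot i j k) = -2 := by
  have := tri_sum i j k hij hik hjk (triRoot i j k).2
  simp only [ip, triRoot] at this ⊢
  rw [this]
  simp [hij, hik, hjk]

lemma triRoot_ip_K (i j k : Fin 8) (hij : i ≠ j) (hik : i ≠ k) (hjk : j ≠ k) :
    ip (Kcls 8) (triRoot i j k) = 0 := by
  have := tri_sum i j k hij hik hjk (fun _ => (-1 : ℤ))
  simp only [ip, Kcls, triRoot] at this ⊢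
  rw [this]
  ring

lemma triRoot_ip_Q (i j k : Fin 8) (hij : i ≠ j) (hik : i ≠ k) (hjk : j ≠ k)
    (Q : Cls 8) : ip Q (triRoot i j k) = Q.1 - (Q.2 i + Q.2 j + Q.2 k) := by
  have := tri_sum i j k hij hik hjk Q.2
  simp only [ip, triRoot] at this ⊢
  rw [this]
  ring

lemma conic_to_Q0_aux : ∀ n : ℕ, ∀ Q : Cls 8, IsConic Q → Q.1.toNat ≤ n →
    ∃ g : Cls 8 ≃ₗ[ℤ] Cls 8, IsWeyl g ∧ g Q = Q₀ := by
  intro n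
  induction n with
  | zero =>
    intro Q hQ hn
    have := conic_pos Q hQ
    omega
  | succ n ih =>
    intro Q hQ hn
    have ha1 := conic_pos Q hQ
    rcases eq_or_lt_of_le ha1 with haeq | ha2
    · -- Q.1 = 1 : Q is a permuted Q₀
      obtain ⟨i, hbi, hzero⟩ := unit_vec Q.2
        (by rw [conic_sum Q hQ, ← haeq]; ring)
        (by rw [conic_sumsq Q hQ, ← haeq]; ring)
      refine ⟨permE (Equiv.swap 0 i), isWeyl_permE _, ?_⟩
      have hQ0v : ∀ j : Fin 8, (![1,0,0,0,0,0,0,0] : Fin 8 → ℤ) j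
          = if j = 0 then 1 else 0 := by decide
      rw [permE_apply]
      refine Prod.ext (by simpa [Q₀] using haeq.symm) ?_
      funext t
      simp only [Function.comp_apply, Q₀]
      rw [hQ0v t]
      by_cases ht0 : t = 0
      · subst ht0
        rw [if_pos rfl, Equiv.swap_apply_left]
        exact hbi
      · rw [if_neg ht0]
        by_cases hti : t = i
        · subst hti
          rw [Equiv.swap_apply_right]
          exact hzero 0 (Ne.symm ht0)
        · rw [Equiv.swap_apply_of_ne_of_ne ht0 hti]
          exact hzero t hti
    · -- Q.1 ≥ 2 : apply a Cremona reflection to decrease the degree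
      obtain ⟨i, j, k, hij, hik, hjk, htrip⟩ := exists_triple Q hQ ha2
      have hrr := triRoot_ip_self i j k hij hik hjk
      have hrK := triRoot_ip_K i j k hij hik hjk
      have hW := isWeyl_reflE (triRoot i j k) hrr hrK
      set Q' := reflE (triRoot i j k) hrr Q with hQ'def
      have hQ'conic : IsConic Q' := weyl_conic hW hQ
      have hQ'fst : Q'.1 = Q.1 + ip Q (triRoot i j k) := by
        rw [hQ'def, reflE_apply]
        simp only [Prod.fst_add, Prod.smul_fst, smul_eq_mul, triRoot]
        ring
      have hdec : Q'.1 ≤ Q.1 - 1 := by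
        rw [hQ'fst, triRoot_ip_Q i j k hij hik hjk Q]
        omega
      have hQ'pos := conic_pos Q' hQ'conic
      obtain ⟨g', hg'W, hg'⟩ := ih Q' hQ'conic (by omega)
      refine ⟨(reflE (triRoot i j k) hrr).trans g', isWeyl_trans hW hg'W, ?_⟩
      rw [LinearEquiv.trans_apply, ← hQ'def, hg']

end DP

namespace DP

lemma sum_shift_sq7 (b : Fin 7 → ℤ) (c : ℤ) :
    ∑ i, (c - b i)^2 = 7*c^2 - 2*c*(∑ i, b i) + ∑ i, b i^2 := by
  have h : ∀ i ∈ Finset.univ, (c - b i)^2 = c^2 - 2*c*b i + b i^2 :=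
    fun i _ => by ring
  rw [Finset.sum_congr rfl h, Finset.sum_add_distrib, Finset.sum_sub_distrib,
    Finset.sum_const, ← Finset.mul_sum]
  simp [Finset.card_univ]

lemma one_le_sq {x : ℤ} (h : 1 ≤ x) : 1 ≤ x^2 := by nlinarith

lemma sorted_classify (d : Fin 7 → ℤ) (mono : Monotone d) (a : ℤ)
    (hs : ∑ i, d i = 2*a + 2) (hq : ∑ i, d i ^ 2 = 8*a - 16)
    (hp : d 5 + d 6 ≤ 4) :
    (a = 4 ∧ d 0 = 1 ∧ d 1 = 1 ∧ d 2 = 1 ∧ d 3 = 1 ∧ d 4 = 2 ∧ d 5 = 2 ∧ d 6 = 2)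
    ∨ (a = 5 ∧ d 0 = 0 ∧ d 1 = 2 ∧ d 2 = 2 ∧ d 3 = 2 ∧ d 4 = 2 ∧ d 5 = 2 ∧ d 6 = 2) := by
  have s4 : ∑ i, (2 - d i)^2 = 4 := by
    rw [sum_shift_sq7 d 2, hs, hq]; ring
  have hb : ∀ i, 0 ≤ d i ∧ d i ≤ 4 := by
    intro i
    have h1 : (2 - d i)^2 ≤ 4 := by
      calc (2 - d i)^2 ≤ ∑ j, (2 - d j)^2 :=
          Finset.single_le_sum (f := fun j => (2 - d j)^2)
            (fun j _ => sq_nonneg _) (Finset.mem_univ i)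
        _ = 4 := s4
    constructor <;> nlinarith
  have hb0 := hb 0; have hb1 := hb 1; have hb2 := hb 2; have hb3 := hb 3
  have hb4 := hb 4; have hb5 := hb 5; have hb6 := hb 6
  have m01 : d 0 ≤ d 1 := mono (by decide : (0:Fin 7) ≤ 1)
  have m12 : d 1 ≤ d 2 := mono (by decide : (1:Fin 7) ≤ 2)
  have m23 : d 2 ≤ d 3 := mono (by decide : (2:Fin 7) ≤ 3)
  have m34 : d 3 ≤ d 4 := mono (by decide : (3:Fin 7) ≤ 4)
  have m45 : d 4 ≤ d 5 := mono (by decide : (4:Fin 7) ≤ 5)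
  have m56 : d 5 ≤ d 6 := mono (by decide : (5:Fin 7) ≤ 6)
  rw [Fin.sum_univ_seven] at s4 hs hq
  -- rule out d 6 ≥ 3
  have hd6 : d 6 ≤ 2 := by
    by_contra hcon
    push_neg at hcon
    have h5 : d 5 ≤ 1 := by omega
    have k0 : 1 ≤ (2 - d 0)^2 := one_le_sq (by omega)
    have k1 : 1 ≤ (2 - d 1)^2 := one_le_sq (by omega)
    have k2 : 1 ≤ (2 - d 2)^2 := one_le_sq (by omega)
    have k3 : 1 ≤ (2 - d 3)^2 := one_le_sq (by omega)
    have k4 : 1 ≤ (2 - d 4)^2 := one_le_sq (by omega)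
    have k5 : 1 ≤ (2 - d 5)^2 := one_le_sq (by omega)
    have k6 : 0 ≤ (2 - d 6)^2 := sq_nonneg _
    linarith
  rcases (by omega : d 0 = 0 ∨ 1 ≤ d 0) with h0 | h0
  · -- the (0,2,2,2,2,2,2) case
    right
    rw [h0] at s4
    norm_num at s4
    have e1 : (2 - d 1)^2 = 0 := by
      linarith [sq_nonneg (2 - d 2), sq_nonneg (2 - d 3), sq_nonneg (2 - d 4),
        sq_nonneg (2 - d 5), sq_nonneg (2 - d 6), sq_nonneg (2 - d 1)]
    have hd1 : d 1 = 2 := by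
      have h := pow_eq_zero_iff (n := 2) (by norm_num) |>.mp e1
      omega
    have hd2 : d 2 = 2 := by omega
    have hd3 : d 3 = 2 := by omega
    have hd4 : d 4 = 2 := by omega
    have hd5 : d 5 = 2 := by omega
    have hd6' : d 6 = 2 := by omega
    refine ⟨by omega, h0, hd1, hd2, hd3, hd4, hd5, hd6'⟩
  · -- the (1,1,1,1,2,2,2) case
    left
    have hsq : ∀ x : ℤ, 1 ≤ x → x ≤ 2 → (2 - x)^2 = 2 - x := by
      intro x h1 h2
      interval_cases x <;> norm_num
    have s0 := hsq (d 0) (by omega) (by omega)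
    have s1 := hsq (d 1) (by omega) (by omega)
    have s2 := hsq (d 2) (by omega) (by omega)
    have s3 := hsq (d 3) (by omega) (by omega)
    have s5 := hsq (d 4) (by omega) (by omega)
    have s6 := hsq (d 5) (by omega) (by omega)
    have s7 := hsq (d 6) (by omega) (by omega)
    have ha : a = 4 := by linarith [s4]
    refine ⟨ha, ?_, ?_, ?_, ?_, ?_, ?_, ?_⟩ <;> omega

/-- Extend a permutation of `Fin 7` to a permutation of `Fin 8` fixing `0`. -/
def extPerm (π : Equiv.Perm (Fin 7)) : Equiv.Perm (Fin 8) where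
  toFun := Fin.cases 0 (fun m => (π m).succ)
  invFun := Fin.cases 0 (fun m => (π.symm m).succ)
  left_inv := by
    intro x
    cases x using Fin.cases with
    | zero => simp
    | succ m => simp
  right_inv := by
    intro x
    cases x using Fin.cases with
    | zero => simp
    | succ m => simp

@[simp] lemma extPerm_zero (π : Equiv.Perm (Fin 7)) : extPerm π 0 = 0 := rfl

@[simp] lemma extPerm_succ (π : Equiv.Perm (Fin 7)) (m : Fin 7) :
    extPerm π m.succ = (π m).succ := by
  simp [extPerm]

end DP

namespace DP

lemma Q0_snd : ∀ t : Fin 8, Q₀.2 t = if t = 0 then 1 else 0 := by decide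

lemma ip_Q0_left (Q : Cls 8) : ip Q₀ Q = Q.1 - Q.2 0 := by
  have h1 : ∀ t ∈ Finset.univ, Q₀.2 t * Q.2 t
      = if t = 0 then Q.2 t else 0 := by
    intro t _
    rw [Q0_snd t]
    split <;> ring
  have h2 : ip Q₀ Q = Q₀.1 * Q.1 - ∑ t, Q₀.2 t * Q.2 t := rfl
  rw [h2, Finset.sum_congr rfl h1, Finset.sum_ite_eq' Finset.univ (0 : Fin 8) Q.2]
  simp [Q₀]

lemma pair_reach_aux : ∀ n : ℕ, ∀ Q : Cls 8, IsConic Q → ip Q₀ Q = 4 →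
    Q.1.toNat ≤ n →
    ∃ g : Cls 8 ≃ₗ[ℤ] Cls 8, IsWeyl g ∧ g Q₀ = Q₀ ∧ (g Q = QA ∨ g Q = QB) := by
  intro n
  induction n with
  | zero =>
    intro Q hQ h4 hn
    have := conic_pos Q hQ
    omega
  | succ n ih =>
    intro Q hQ h4 hn
    have hb0 : Q.2 0 = Q.1 - 4 := by
      have := ip_Q0_left Q
      omega
    by_cases hex : ∃ j k : Fin 8, j ≠ 0 ∧ k ≠ 0 ∧ j ≠ k ∧ 5 ≤ Q.2 j + Q.2 k
    · obtain ⟨j, k, hj0, hk0, hjk, hsum⟩ := hex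
      have h0j : (0 : Fin 8) ≠ j := Ne.symm hj0
      have h0k : (0 : Fin 8) ≠ k := Ne.symm hk0
      have hrr := triRoot_ip_self 0 j k h0j h0k hjk
      have hrK := triRoot_ip_K 0 j k h0j h0k hjk
      have hW := isWeyl_reflE _ hrr hrK
      have hfix : reflE (triRoot 0 j k) hrr Q₀ = Q₀ := by
        rw [reflE_apply]
        have h0 : ip Q₀ (triRoot 0 j k) = 0 := by
          rw [triRoot_ip_Q 0 j k h0j h0k hjk, Q0_snd 0, Q0_snd j, Q0_snd k,
            if_pos rfl, if_neg hj0, if_neg hk0]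
          show (1 : ℤ) - (1 + 0 + 0) = 0
          ring
        rw [h0, zero_smul, add_zero]
      set Q' := reflE (triRoot 0 j k) hrr Q with hQ'def
      have hQ'c : IsConic Q' := weyl_conic hW hQ
      have h4' : ip Q₀ Q' = 4 := by
        conv_lhs => rw [← hfix]
        rw [hQ'def, hW.1]
        exact h4
      have hQ'fst : Q'.1 = Q.1 + ip Q (triRoot 0 j k) := by
        rw [hQ'def, reflE_apply]
        simp only [Prod.fst_add, Prod.smul_fst, smul_eq_mul, triRoot]
        ring
      have hipQr : ip Q (triRoot 0 j k) ≤ -1 := by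
        rw [triRoot_ip_Q 0 j k h0j h0k hjk]
        omega
      have hQ'pos := conic_pos Q' hQ'c
      obtain ⟨g', hg'W, hg'fix, hg'⟩ := ih Q' hQ'c h4' (by omega)
      refine ⟨(reflE (triRoot 0 j k) hrr).trans g', isWeyl_trans hW hg'W, ?_, ?_⟩
      · rw [LinearEquiv.trans_apply, hfix, hg'fix]
      · rw [LinearEquiv.trans_apply, ← hQ'def]
        exact hg'
    · push_neg at hex
      set a := Q.1 with hadef
      set c : Fin 7 → ℤ := fun m => Q.2 m.succ with hcdef
      have hcs : ∑ m, c m = 2*a + 2 := by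
        have h := conic_sum Q hQ
        rw [Fin.sum_univ_succ] at h
        have h' : ∑ m : Fin 7, c m = ∑ m : Fin 7, Q.2 m.succ := rfl
        rw [h']
        omega
      have hcq : ∑ m, c m ^ 2 = 8*a - 16 := by
        have h := conic_sumsq Q hQ
        rw [Fin.sum_univ_succ] at h
        have h' : ∑ m : Fin 7, c m ^ 2 = ∑ m : Fin 7, Q.2 m.succ ^ 2 := rfl
        rw [h']
        have hb0' : Q.2 0 ^ 2 = a^2 - 8*a + 16 := by rw [hb0]; ring
        linarith
      set σs := Tuple.sort c with hσs
      set d : Fin 7 → ℤ := c ∘ σs with hddef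
      have hmono : Monotone d := Tuple.monotone_sort c
      have hds : ∑ m, d m = 2*a + 2 := by
        rw [← hcs]
        exact Equiv.sum_comp σs c
      have hdq : ∑ m, d m ^ 2 = 8*a - 16 := by
        rw [← hcq]
        exact Equiv.sum_comp σs (fun m => c m ^ 2)
      have hdp : d 5 + d 6 ≤ 4 := by
        have hne : σs 5 ≠ σs 6 := fun h => by
          have := σs.injective h
          simp at this
        have := hex (σs 5).succ (σs 6).succ (Fin.succ_ne_zero _) (Fin.succ_ne_zero _)
          (fun h => hne (Fin.succ_injective _ h))
        have e5 : d 5 = Q.2 (σs 5).succ := rfl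
        have e6 : d 6 = Q.2 (σs 6).succ := rfl
        omega
      set π : Equiv.Perm (Fin 7) := (Fin.revPerm).trans σs with hπ
      have key : ∀ m : Fin 7, Q.2 ((π m).succ) = d (Fin.revPerm m) := fun m => rfl
      have hfixg : permE (extPerm π) Q₀ = Q₀ := by
        rw [permE_apply]
        refine Prod.ext rfl ?_
        funext t
        simp only [Function.comp_apply]
        refine Fin.cases ?_ (fun m => ?_) t
        · rfl
        · rw [extPerm_succ, Q0_snd, Q0_snd,
            if_neg (Fin.succ_ne_zero _), if_neg (Fin.succ_ne_zero _)]
      rcases sorted_classify d hmono a hds hdq hdp with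
        ⟨ha, h0, h1, h2, h3, h4', h5, h6⟩ | ⟨ha, h0, h1, h2, h3, h4', h5, h6⟩
      · -- QA branch
        have hdfun : ∀ i : Fin 7, d i = ![1,1,1,1,2,2,2] i := by
          intro i
          fin_cases i
          exacts [h0, h1, h2, h3, h4', h5, h6]
        refine ⟨permE (extPerm π), isWeyl_permE _, hfixg, Or.inl ?_⟩
        rw [permE_apply]
        refine Prod.ext (by simpa [QA] using ha) ?_
        funext t
        simp only [Function.comp_apply]
        refine Fin.cases ?_ (fun m => ?_) t
        · show Q.2 0 = QA.2 0
          have : QA.2 0 = 0 := rfl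
          rw [this]
          omega
        · rw [extPerm_succ]
          show Q.2 ((π m).succ) = QA.2 m.succ
          rw [key m, hdfun (Fin.revPerm m)]
          revert m
          decide
      · -- QB branch
        have hdfun : ∀ i : Fin 7, d i = ![0,2,2,2,2,2,2] i := by
          intro i
          fin_cases i
          exacts [h0, h1, h2, h3, h4', h5, h6]
        refine ⟨permE (extPerm π), isWeyl_permE _, hfixg, Or.inr ?_⟩
        rw [permE_apply]
        refine Prod.ext (by simpa [QB] using ha) ?_
        funext t
        simp only [Function.comp_apply]
        refine Fin.cases ?_ (fun m => ?_) t
        · show Q.2 0 = QB.2 0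
          have : QB.2 0 = 1 := rfl
          rw [this]
          omega
        · rw [extPerm_succ]
          show Q.2 ((π m).succ) = QB.2 m.succ
          rw [key m, hdfun (Fin.revPerm m)]
          revert m
          decide

lemma pair_reach (Q1 Q2 : Cls 8) (h1 : IsConic Q1) (h2 : IsConic Q2)
    (h12 : ip Q1 Q2 = 4) :
    ∃ g : Cls 8 ≃ₗ[ℤ] Cls 8, IsWeyl g ∧ g Q1 = Q₀ ∧ (g Q2 = QA ∨ g Q2 = QB) := by
  obtain ⟨g1, hg1W, hg1⟩ := conic_to_Q0_aux Q1.1.toNat Q1 h1 le_rfl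
  have h2' : IsConic (g1 Q2) := weyl_conic hg1W h2
  have h4' : ip Q₀ (g1 Q2) = 4 := by
    rw [← hg1, hg1W.1]
    exact h12
  obtain ⟨g2, hg2W, hg2fix, hg2⟩ := pair_reach_aux (g1 Q2).1.toNat (g1 Q2) h2' h4' le_rfl
  refine ⟨g1.trans g2, isWeyl_trans hg1W hg2W, ?_, ?_⟩
  · rw [LinearEquiv.trans_apply, hg1, hg2fix]
  · rw [LinearEquiv.trans_apply]
    exact hg2

end DP

namespace DP

lemma conicQ0 : IsConic Q₀ := by constructor <;> decide
lemma conicQA : IsConic QA := by constructor <;> decide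
lemma conicQB : IsConic QB := by constructor <;> decide
lemma ipQ0QA : ip Q₀ QA = 4 := by decide
lemma ipQ0QB : ip Q₀ QB = 4 := by decide
lemma minusoneE8 : IsMinusOne E₈ := by constructor <;> decide
lemma ipSumB : ip (Q₀ + QB) E₈ = 0 := by decide

lemma sumQA : Q₀ + QA = ((5 : ℤ), ![1,2,2,2,1,1,1,1]) := by decide

lemma minusone_sum (L : Cls 8) (h : IsMinusOne L) : ∑ i, L.2 i = 3 * L.1 - 1 := by
  have h2 := h.2
  simp only [ip, Kcls] at h2
  have : ∑ i, (-1 : ℤ) * L.2 i = - ∑ i, L.2 i := by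
    rw [← Finset.sum_neg_distrib]
    exact Finset.sum_congr rfl fun i _ => by ring
  rw [this] at h2
  linarith

lemma minusone_sumsq (L : Cls 8) (h : IsMinusOne L) : ∑ i, L.2 i ^ 2 = L.1 ^ 2 + 1 := by
  have h1 := h.1
  simp only [ip] at h1
  have : ∑ i, L.2 i * L.2 i = ∑ i, L.2 i ^ 2 :=
    Finset.sum_congr rfl fun i _ => by ring
  rw [this] at h1
  nlinarith

lemma sumAmpleA : SumAmple (Q₀, QA) := by
  intro L hL
  set a := L.1 with hadef
  set b := L.2 with hbdef
  set cv : Fin 8 → ℤ := ![1,2,2,2,1,1,1,1] with hcv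
  have hs : ∑ i, b i = 3 * a - 1 := minusone_sum L hL
  have hq : ∑ i, b i ^ 2 = a ^ 2 + 1 := minusone_sumsq L hL
  have hip : ip (Q₀ + QA) L = 5 * a - ∑ i, cv i * b i := by
    rw [sumQA]
    show (5 : ℤ) * a - ∑ i, cv i * b i = _
    rfl
  rw [hip]
  have hcsq : ∑ i, cv i ^ 2 = 17 := by decide
  have hrange : -1 ≤ a ∧ a ≤ 7 := by
    have hcs := cs8 b
    rw [hs, hq] at hcs
    constructor <;> nlinarith
  rcases le_or_gt 2 a with ha2 | ha2
  · -- Cauchy–Schwarz case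
    by_contra hcon
    push_neg at hcon
    have hCS := Finset.sum_mul_sq_le_sq_mul_sq Finset.univ cv b
    rw [hcsq, hq] at hCS
    have h5a : 5 * a ≤ ∑ i, cv i * b i := by linarith
    nlinarith
  · have ha1 : a ≤ 1 := by omega
    have ham1 : -1 ≤ a := hrange.1
    interval_cases a
    · -- a = -1 : impossible
      exfalso
      have hnn : ∀ i ∈ Finset.univ, (0:ℤ) ≤ b i ^ 2 + b i :=
        fun i _ => sq_add_self_nonneg (b i)
      have hsum : ∑ i, (b i ^ 2 + b i) = -2 := by
        rw [Finset.sum_add_distrib, hs, hq]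
        norm_num
      have := Finset.sum_nonneg hnn
      omega
    · -- a = 0 : L = -e_i
      have hz : ∑ i, (b i ^ 2 + b i) = 0 := by
        rw [Finset.sum_add_distrib, hs, hq]
        norm_num
      have hall := (Finset.sum_eq_zero_iff_of_nonneg
        (fun i _ => sq_add_self_nonneg (b i))).mp hz
      have hble : ∀ i, b i ≤ 0 := by
        intro i
        have h := hall i (Finset.mem_univ i)
        nlinarith
      have hterm : ∀ i ∈ Finset.univ, cv i * b i ≤ 1 * b i := by
        intro i _
        have hc1 : 1 ≤ cv i := by
          fin_cases i <;> norm_num [hcv]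
        exact mul_le_mul_of_nonpos_right hc1 (hble i)
      have hsum : ∑ i, cv i * b i ≤ ∑ i, 1 * b i := Finset.sum_le_sum hterm
      have : ∑ i, (1:ℤ) * b i = -1 := by
        rw [Finset.sum_congr rfl (fun i _ => one_mul (b i)), hs]
        norm_num
      omega
    · -- a = 1 : L = ℓ - e_i - e_j
      have hz : ∑ i, (b i ^ 2 - b i) = 0 := by
        rw [Finset.sum_sub_distrib, hs, hq]
        norm_num
      have hall := (Finset.sum_eq_zero_iff_of_nonneg
        (fun i _ => sq_sub_self_nonneg (b i))).mp hz
      have hbnn : ∀ i, 0 ≤ b i := by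
        intro i
        have h := hall i (Finset.mem_univ i)
        nlinarith
      have hterm : ∀ i ∈ Finset.univ, cv i * b i ≤ 2 * b i := by
        intro i _
        have hc2 : cv i ≤ 2 := by
          fin_cases i <;> norm_num [hcv]
        exact mul_le_mul_of_nonneg_right hc2 (hbnn i)
      have hsum : ∑ i, cv i * b i ≤ ∑ i, 2 * b i := Finset.sum_le_sum hterm
      have h2b : ∑ i, (2:ℤ) * b i = 4 := by
        rw [← Finset.mul_sum, hs]
        norm_num
      omega

lemma notSumAmpleB : ¬ SumAmple (Q₀, QB) := by
  intro h
  have := h E₈ minusoneE8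
  rw [ipSumB] at this
  exact lt_irrefl 0 this

lemma sumAmple_weyl {g : Cls 8 ≃ₗ[ℤ] Cls 8} (hg : IsWeyl g) {x y : Cls 8}
    (h : SumAmple (x, y)) : SumAmple (g x, g y) := by
  intro L hL
  have hL' : IsMinusOne (g.symm L) := weyl_minusone (isWeyl_symm hg) hL
  have hpos := h (g.symm L) hL'
  have : ip (g x + g y) L = ip (x + y) (g.symm L) := by
    rw [← map_add, ← hg.1 (x + y) (g.symm L), g.apply_symm_apply]
  rw [this]
  exact hpos

end DP

namespace DP

def repA : Pair4 := ⟨(Q₀, QA), conicQ0, conicQA, ipQ0QA⟩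
def repB : Pair4 := ⟨(Q₀, QB), conicQ0, conicQB, ipQ0QB⟩

lemma rel_refl (p : Pair4) : pair4Rel p p :=
  ⟨LinearEquiv.refl ℤ (Cls 8), isWeyl_refl, rfl, rfl⟩

lemma rel_symm {p q : Pair4} (h : pair4Rel p q) : pair4Rel q p := by
  obtain ⟨g, hgW, h1, h2⟩ := h
  refine ⟨g.symm, isWeyl_symm hgW, ?_, ?_⟩
  · rw [← h1, g.symm_apply_apply]
  · rw [← h2, g.symm_apply_apply]

lemma rel_trans {p q r : Pair4} (h : pair4Rel p q) (h' : pair4Rel q r) :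
    pair4Rel p r := by
  obtain ⟨g, hgW, h1, h2⟩ := h
  obtain ⟨g', hg'W, h1', h2'⟩ := h'
  exact ⟨g.trans g', isWeyl_trans hgW hg'W,
    by rw [LinearEquiv.trans_apply, h1, h1'],
    by rw [LinearEquiv.trans_apply, h2, h2']⟩

lemma classify (p : Pair4) : pair4Rel p repA ∨ pair4Rel p repB := by
  obtain ⟨hc1, hc2, h12⟩ := p.2
  obtain ⟨g, hgW, hg1, hg2⟩ := pair_reach p.1.1 p.1.2 hc1 hc2 h12
  rcases hg2 with h | h
  · exact Or.inl ⟨g, hgW, hg1, h⟩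
  · exact Or.inr ⟨g, hgW, hg1, h⟩

lemma rel_iff_ample (p q : Pair4) : pair4Rel p q → (SumAmple p.1 ↔ SumAmple q.1) := by
  intro h
  constructor
  · intro hp
    obtain ⟨g, hgW, h1, h2⟩ := h
    have := sumAmple_weyl hgW (x := p.1.1) (y := p.1.2) hp
    rwa [h1, h2] at this
  · intro hq
    obtain ⟨g, hgW, h1, h2⟩ := rel_symm h
    have := sumAmple_weyl hgW (x := q.1.1) (y := q.1.2) hq
    rwa [h1, h2] at this

lemma ampleA' : SumAmple repA.1 := sumAmpleA
lemma notAmpleB' : ¬ SumAmple repB.1 := notSumAmpleB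

lemma ample_of_relA {p : Pair4} (h : pair4Rel p repA) : SumAmple p.1 :=
  (rel_iff_ample p repA h).mpr ampleA'

lemma not_ample_of_relB {p : Pair4} (h : pair4Rel p repB) : ¬ SumAmple p.1 :=
  fun hp => notAmpleB' ((rel_iff_ample p repB h).mp hp)

lemma main_iff (p q : Pair4) : pair4Rel p q ↔ (SumAmple p.1 ↔ SumAmple q.1) := by
  constructor
  · exact rel_iff_ample p q
  · intro hiff
    rcases classify p with hp | hp <;> rcases classify q with hq | hq
    · exact rel_trans hp (rel_symm hq)
    · exact absurd (hiff.mp (ample_of_relA hp)) (not_ample_of_relB hq)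
    · exact absurd (hiff.mpr (ample_of_relA hq)) (not_ample_of_relB hp)
    · exact rel_trans hp (rel_symm hq)

open Classical in
noncomputable def quotEquivBool : Quot pair4Rel ≃ Bool where
  toFun := Quot.lift (fun p => if SumAmple p.1 then true else false)
    (by
      intro p q h
      have hiff := rel_iff_ample p q h
      show (if SumAmple p.1 then true else false) = (if SumAmple q.1 then true else false)
      by_cases hp : SumAmple p.1
      · rw [if_pos hp, if_pos (hiff.mp hp)]
      · rw [if_neg hp, if_neg (fun hq => hp (hiff.mpr hq))])
  invFun b := if b then Quot.mk _ repA else Quot.mk _ repB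
  left_inv := by
    refine Quot.ind ?_
    intro p
    by_cases hp : SumAmple p.1
    · simp only [Quot.lift, if_pos hp, if_true]
      refine Quot.sound (rel_symm ?_)
      rcases classify p with h | h
      · exact h
      · exact absurd hp (not_ample_of_relB h)
    · simp only [Quot.lift, if_neg hp, if_false]
      refine Quot.sound (rel_symm ?_)
      rcases classify p with h | h
      · exact absurd (ample_of_relA h) hp
      · exact h
  right_inv := by
    intro b
    cases b
    · simp only [if_false]
      show (if SumAmple repB.1 then true else false) = false
      rw [if_neg notAmpleB']
    · simp only [if_true]
      show (if SumAmple repA.1 then true else false) = true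
      rw [if_pos ampleA']

lemma card_two : Nat.card (Quot pair4Rel) = 2 := by
  rw [Nat.card_congr quotEquivBool]
  simp

end DP


/-- The Weyl group W₈ acts on ordered pairs of conic classes with intersection
product 4 with exactly two orbits; two pairs lie in the same orbit iff they
agree on the ampleness of their sum; and (Q₀, QA) and (Q₀, QB) are
representatives of the two orbits, the first with ample sum, the second with
sum pairing to 0 with the (−1)-class E₈. -/
theorem stmt7 :
    Nat.card (Quot pair4Rel) = 2 ∧
    (∀ p q : Pair4, pair4Rel p q ↔ (SumAmple p.1 ↔ SumAmple q.1)) ∧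
    (IsConic Q₀ ∧ IsConic QA ∧ IsConic QB ∧ ip Q₀ QA = 4 ∧ ip Q₀ QB = 4 ∧
      SumAmple (Q₀, QA) ∧ IsMinusOne E₈ ∧ ip (Q₀ + QB) E₈ = 0) := by
  exact ⟨DP.card_two, DP.main_iff,
    DP.conicQ0, DP.conicQA, DP.conicQB, DP.ipQ0QA, DP.ipQ0QB,
    DP.sumAmpleA, DP.minusoneE8, DP.ipSumB⟩
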